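/- Completeness of flexible coSLD resolution with respect to the regular declarative semantics: for every logic program with coclauses (P,coP), every finite sequence G of finite atoms and every finite set of equations E, if σ ∈ Ans(G, E, FlexReg(P,coP)), then there exist a finite set of equations E' and a ground substitution θ ∈ sol(E') such that the operational semantics judgment P;coP ⊢ ∅ : ⟨G | E⟩ ⇒ E' is derivable and σ ⊑ θ. -/

import Mathlib

/- Framework: flexible coinductive logic programming (logic programs with coclauses).
   Terms are possibly infinite trees, modelled as M-types of a polynomial functor. -/

namespace FlexLP

/-- A first-order signature: function symbols and predicate symbols, each with an arity.
Variables are represented by natural numbers (a countably infinite set). -/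
structure Sig where
  Func : Type
  far : Func → ℕ
  Pred : Type
  par : Pred → ℕ

/-- Polynomial functor whose M-type is the type of possibly infinite terms:
nodes are labelled by function symbols (with `far` children) or variables (no children). -/
def TermP (S : Sig) : PFunctor :=
  ⟨S.Func ⊕ ℕ, fun l => Fin (match l with | Sum.inl f => S.far f | Sum.inr _ => 0)⟩

/-- Possibly infinite terms over the signature `S`. -/
def Term (S : Sig) : Type := (TermP S).M

/-- The term consisting of a single variable `x`. -/
def Term.var (S : Sig) (x : ℕ) : Term S :=
  PFunctor.M.mk ⟨Sum.inr x, fun i => i.elim0⟩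

/-- The variable `x` occurs in the term `t`. -/
inductive Term.Occurs (S : Sig) (x : ℕ) : Term S → Prop
  | root (t : Term S) (h : (PFunctor.M.dest t).1 = Sum.inr x) : Term.Occurs S x t
  | child (t : Term S) (i : (TermP S).B (PFunctor.M.dest t).1)
      (h : Term.Occurs S x ((PFunctor.M.dest t).2 i)) : Term.Occurs S x t

/-- The term `t` is finite (syntactic): all its branches are finite. -/
inductive Term.IsFinite (S : Sig) : Term S → Prop
  | mk (t : Term S) (h : ∀ i, Term.IsFinite S ((PFunctor.M.dest t).2 i)) : Term.IsFinite S t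

/-- The term `t` is ground: no variable occurs in it. -/
def Term.Ground (S : Sig) (t : Term S) : Prop := ∀ x, ¬ Term.Occurs S x t

/-- A substitution: a map from a finite set of variables to terms. -/
structure Subst (S : Sig) where
  toFun : ℕ → Option (Term S)
  finDom : {x | (toFun x).isSome}.Finite

/-- Domain of a substitution. -/
def Subst.dom {S : Sig} (σ : Subst S) : Set ℕ := {x | (σ.toFun x).isSome}

/-- A substitution is ground if all its values are ground terms. -/
def Subst.Ground {S : Sig} (σ : Subst S) : Prop :=
  ∀ x t, σ.toFun x = some t → Term.Ground S t

/-- `σ ⊑ θ` : `dom σ ⊆ dom θ` and the two substitutions agree on `dom σ`. -/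
def Subst.le {S : Sig} (σ θ : Subst S) : Prop :=
  ∀ x t, σ.toFun x = some t → θ.toFun x = some t

/-- One step of (simultaneous) substitution application, as a coalgebra.
The boolean flag records whether we are still in the original term (`true`)
or inside a substituted term (`false`). -/
def substStep (S : Sig) (σ : Subst S) : Term S × Bool → (TermP S).Obj (Term S × Bool) :=
  fun p =>
    match PFunctor.M.dest p.1, p.2 with
    | ⟨Sum.inl f, ch⟩, b => ⟨Sum.inl f, fun i => (ch i, b)⟩
    | ⟨Sum.inr x, ch⟩, true =>
        match σ.toFun x with
        | some s =>
            match PFunctor.M.dest s with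
            | ⟨l, ch'⟩ => ⟨l, fun i => (ch' i, false)⟩
        | none => ⟨Sum.inr x, fun i => (ch i, true)⟩
    | ⟨Sum.inr x, ch⟩, false => ⟨Sum.inr x, fun i => (ch i, false)⟩

/-- Application `tσ` of a substitution to a term. -/
def Term.subst {S : Sig} (t : Term S) (σ : Subst S) : Term S :=
  PFunctor.M.corec (substStep S σ) (t, true)

/-- Atoms: a predicate symbol applied to terms (a possibly infinite tree whose
root is labelled by a predicate symbol). -/
structure Atom (S : Sig) where
  pred : S.Pred
  args : Fin (S.par pred) → Term S

/-- The variable `x` occurs in the atom `A`. -/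
def Atom.Occurs {S : Sig} (x : ℕ) (A : Atom S) : Prop := ∃ i, Term.Occurs S x (A.args i)

/-- Ground atoms. The set of all ground atoms is the complete Herbrand base. -/
def Atom.Ground {S : Sig} (A : Atom S) : Prop := ∀ i, Term.Ground S (A.args i)

/-- Finite (syntactic) atoms. -/
def Atom.IsFinite {S : Sig} (A : Atom S) : Prop := ∀ i, Term.IsFinite S (A.args i)

/-- Application of a substitution to an atom. -/
def Atom.subst {S : Sig} (A : Atom S) (σ : Subst S) : Atom S :=
  ⟨A.pred, fun i => Term.subst (A.args i) σ⟩

/-- A (definite) clause `head :- body`, made of finite atoms. -/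
structure Clause (S : Sig) where
  head : Atom S
  body : List (Atom S)
  finHead : head.IsFinite
  finBody : ∀ B ∈ body, B.IsFinite

/-- Variables occurring in a clause. -/
def clauseVars {S : Sig} (C : Clause S) : Set ℕ :=
  {x | Atom.Occurs x C.head ∨ ∃ B ∈ C.body, Atom.Occurs x B}

/-- `Ground P` : the ground instances of clauses of `P`, viewed as inference rules
(pairs premises/conclusion) on the complete Herbrand base. -/
def GroundInst {S : Sig} (P : Set (Clause S)) : Set (Atom S × List (Atom S)) :=
  {r | ∃ C ∈ P, ∃ σ : Subst S, σ.Ground ∧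
        r.1 = C.head.subst σ ∧ r.2 = C.body.map (fun B => B.subst σ) ∧
        r.1.Ground ∧ ∀ B ∈ r.2, B.Ground}

/-- The (one step) inference operator `T_P` associated to a program. -/
def TP {S : Sig} (P : Set (Clause S)) (I : Set (Atom S)) : Set (Atom S) :=
  {A | ∃ r ∈ GroundInst P, r.1 = A ∧ ∀ B ∈ r.2, B ∈ I}

/-- `I` is a model of `P`. -/
def IsModel {S : Sig} (P : Set (Clause S)) (I : Set (Atom S)) : Prop := TP P I ⊆ I

/-- `I` is a comodel of `P`. -/
def IsComodel {S : Sig} (P : Set (Clause S)) (I : Set (Atom S)) : Prop := I ⊆ TP P I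

/-- `Ind P` : the inductive declarative semantics, i.e. the least model of `P`. -/
def Ind {S : Sig} (P : Set (Clause S)) : Set (Atom S) := ⋂₀ {I | IsModel P I}

/-- `FlexCo (P,coP)` : the declarative semantics of a logic program with coclauses,
i.e. the largest comodel of `P` included in `Ind (P ∪ coP)` (union of all such comodels). -/
def FlexCo {S : Sig} (P coP : Set (Clause S)) : Set (Atom S) :=
  ⋃₀ {I | IsComodel P I ∧ I ⊆ Ind (P ∪ coP)}

/-- `FlexReg (P,coP)` : the regular declarative semantics, i.e. the union of all
finite comodels of `P` included in `Ind (P ∪ coP)`. -/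
def FlexReg {S : Sig} (P coP : Set (Clause S)) : Set (Atom S) :=
  ⋃₀ {I | I.Finite ∧ IsComodel P I ∧ I ⊆ Ind (P ∪ coP)}

/-- An equation `s ≐ t` between terms. -/
abbrev Eqn (S : Sig) := Term S × Term S

/-- Variables occurring in a set of equations. -/
def eqnVars {S : Sig} (E : Set (Eqn S)) : Set ℕ :=
  {x | ∃ e ∈ E, Term.Occurs S x e.1 ∨ Term.Occurs S x e.2}

/-- `E` is a finite set of equations between finite (syntactic) terms. -/
def EqnSetFin {S : Sig} (E : Set (Eqn S)) : Prop :=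
  E.Finite ∧ ∀ e ∈ E, Term.IsFinite S e.1 ∧ Term.IsFinite S e.2

/-- `sol E` : the set of solutions of `E`, i.e. ground substitutions defined on all
variables of `E` that unify all the equations in `E`. -/
def sol {S : Sig} (E : Set (Eqn S)) : Set (Subst S) :=
  {σ | σ.Ground ∧ eqnVars E ⊆ σ.dom ∧ ∀ e ∈ E, e.1.subst σ = e.2.subst σ}

/-- `E` is solvable. -/
def Solvable {S : Sig} (E : Set (Eqn S)) : Prop := (sol E).Nonempty

/-- `eqs(A,B)` : the equations between the corresponding arguments of two atoms
with the same predicate symbol. -/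
def atomEqs {S : Sig} (A B : Atom S) : Set (Eqn S) :=
  {e | ∃ (h : A.pred = B.pred) (i : Fin (S.par A.pred)),
        e = (A.args i, B.args (Fin.cast (congrArg S.par h) i))}

/-- Variables occurring in a set of atoms. -/
def atomsVars {S : Sig} (H : Set (Atom S)) : Set ℕ := {x | ∃ A ∈ H, Atom.Occurs x A}

/-- Variables occurring in a sequence of atoms (a goal). -/
def goalVars {S : Sig} (G : List (Atom S)) : Set ℕ := {x | ∃ A ∈ G, Atom.Occurs x A}

/-- `ρ` is a renaming of the variables of clause `C` to fresh variables avoiding `avoid`: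
it maps (injectively) every variable of `C` to a variable not in `avoid`. -/
def FreshRenamingFor {S : Sig} (ρ : Subst S) (C : Clause S) (avoid : Set ℕ) : Prop :=
  (∀ x t, ρ.toFun x = some t → ∃ y, t = Term.var S y ∧ y ∉ avoid) ∧
  clauseVars C ⊆ ρ.dom ∧
  (∀ x y, ρ.toFun x = ρ.toFun y → (ρ.toFun x).isSome → x = y)

/-- The big-step operational semantics judgment `P;coP ⊢ H : ⟨G | E⟩ ⇒ E'` of
flexible coSLD resolution, inductively defined by the rules (empty), (co-hyp), (step). -/
inductive OpSem (S : Sig) :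
    Set (Clause S) → Set (Clause S) → Set (Atom S) → List (Atom S) →
      Set (Eqn S) → Set (Eqn S) → Prop
  | empty (P coP : Set (Clause S)) (H : Set (Atom S)) (E : Set (Eqn S)) :
      OpSem S P coP H [] E E
  | cohyp {P coP : Set (Clause S)} {H : Set (Atom S)} {G1 G2 : List (Atom S)}
      {A B : Atom S} {E1 E2 E3 : Set (Eqn S)} :
      coP ≠ ∅ → B ∈ H → A.pred = B.pred →
      Solvable (E1 ∪ atomEqs A B) →
      OpSem S (P ∪ coP) ∅ ∅ [A] (E1 ∪ atomEqs A B) E2 →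
      OpSem S P coP H (G1 ++ G2) E2 E3 →
      OpSem S P coP H (G1 ++ A :: G2) E1 E3
  | step {P coP : Set (Clause S)} {H : Set (Atom S)} {G1 G2 : List (Atom S)}
      {A : Atom S} {E1 E2 E3 : Set (Eqn S)} (C : Clause S) (ρ : Subst S) :
      C ∈ P →
      FreshRenamingFor ρ C (eqnVars E1 ∪ atomsVars H ∪ goalVars (G1 ++ A :: G2)) →
      A.pred = C.head.pred →
      Solvable (E1 ∪ atomEqs A (C.head.subst ρ)) →
      OpSem S P coP (H ∪ {A}) (C.body.map (fun B => B.subst ρ))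
        (E1 ∪ atomEqs A (C.head.subst ρ)) E2 →
      OpSem S P coP H (G1 ++ G2) E2 E3 →
      OpSem S P coP H (G1 ++ A :: G2) E1 E3

/-- `Ans(G,E,I)` : the set of answers to the goal `⟨G | E⟩` correct in the
interpretation `I`. -/
def Ans {S : Sig} (G : List (Atom S)) (E : Set (Eqn S)) (I : Set (Atom S)) :
    Set (Subst S) :=
  {σ | σ ∈ sol E ∧ goalVars G ⊆ σ.dom ∧ ∀ A ∈ G, A.subst σ ∈ I}

/-- The inductive interpretation of the inference system `Loop(P,coP)`, whose judgments
`H ⊢ A` pair a ground atom with a set of ground atoms (circular hypotheses);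
rules: (hp) `H ⊢ A` if `A ∈ H` and `A ∈ Ind (P ∪ coP)`;
(rule) from `H∪{A} ⊢ B` for every premise `B` of a ground instance of a clause of `P`
with conclusion `A`, infer `H ⊢ A`. -/
inductive LoopInd {S : Sig} (P coP : Set (Clause S)) : Set (Atom S) → Atom S → Prop
  | hp {H : Set (Atom S)} {A : Atom S} :
      A ∈ H → A ∈ Ind (P ∪ coP) → LoopInd P coP H A
  | rule {H : Set (Atom S)} {A : Atom S} (r : Atom S × List (Atom S)) :
      r ∈ GroundInst P → r.1 = A →
      (∀ B ∈ r.2, LoopInd P coP (H ∪ {A}) B) →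
      LoopInd P coP H A


section Aux

variable {S : Sig}


lemma substStep_false (σ : Subst S) (y : Term S) :
    substStep S σ (y, false) = ⟨(PFunctor.M.dest y).1, fun i => ((PFunctor.M.dest y).2 i, false)⟩ := by
  rcases h : PFunctor.M.dest y with ⟨l, ch⟩
  show (match PFunctor.M.dest y, false with
    | ⟨Sum.inl f, ch⟩, b => (⟨Sum.inl f, fun i => (ch i, b)⟩ : (TermP S).Obj (Term S × Bool))
    | ⟨Sum.inr x, ch⟩, true =>
        match σ.toFun x with
        | some s =>
            match PFunctor.M.dest s with
            | ⟨l, ch'⟩ => ⟨l, fun i => (ch' i, false)⟩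
        | none => ⟨Sum.inr x, fun i => (ch i, true)⟩
    | ⟨Sum.inr x, ch⟩, false => ⟨Sum.inr x, fun i => (ch i, false)⟩) = _
  rw [h]
  cases l <;> rfl


lemma corec_false (σ : Subst S) (s : Term S) :
    PFunctor.M.corec (substStep S σ) (s, false) = s := by
  apply PFunctor.M.bisim (fun x y => x = PFunctor.M.corec (substStep S σ) (y, false))
  · rintro x y rfl
    refine ⟨(PFunctor.M.dest y).1, fun i => PFunctor.M.corec (substStep S σ) ((PFunctor.M.dest y).2 i, false),
      (PFunctor.M.dest y).2, ?_, rfl, fun i => rfl⟩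
    rw [PFunctor.M.dest_corec, substStep_false σ y]
    rfl
  · rfl

lemma substStep_inl (σ : Subst S) {t : Term S} {f ch} (h : PFunctor.M.dest t = ⟨Sum.inl f, ch⟩)
    (b : Bool) : substStep S σ (t, b) = ⟨Sum.inl f, fun i => (ch i, b)⟩ := by
  show (match PFunctor.M.dest t, b with
    | ⟨Sum.inl f, ch⟩, b => (⟨Sum.inl f, fun i => (ch i, b)⟩ : (TermP S).Obj (Term S × Bool))
    | ⟨Sum.inr x, ch⟩, true =>
        match σ.toFun x with
        | some s => match PFunctor.M.dest s with | ⟨l, ch'⟩ => ⟨l, fun i => (ch' i, false)⟩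
        | none => ⟨Sum.inr x, fun i => (ch i, true)⟩
    | ⟨Sum.inr x, ch⟩, false => ⟨Sum.inr x, fun i => (ch i, false)⟩) = _
  rw [h]

lemma substStep_var_some (σ : Subst S) {t : Term S} {x ch s} (h : PFunctor.M.dest t = ⟨Sum.inr x, ch⟩)
    (hs : σ.toFun x = some s) :
    substStep S σ (t, true) = ⟨(PFunctor.M.dest s).1, fun i => ((PFunctor.M.dest s).2 i, false)⟩ := by
  show (match PFunctor.M.dest t, true with
    | ⟨Sum.inl f, ch⟩, b => (⟨Sum.inl f, fun i => (ch i, b)⟩ : (TermP S).Obj (Term S × Bool))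
    | ⟨Sum.inr x, ch⟩, true =>
        match σ.toFun x with
        | some s => match PFunctor.M.dest s with | ⟨l, ch'⟩ => ⟨l, fun i => (ch' i, false)⟩
        | none => ⟨Sum.inr x, fun i => (ch i, true)⟩
    | ⟨Sum.inr x, ch⟩, false => ⟨Sum.inr x, fun i => (ch i, false)⟩) = _
  rw [h]
  change (match σ.toFun x with
    | some s => match PFunctor.M.dest s with
      | ⟨l, ch'⟩ => (⟨l, fun i => (ch' i, false)⟩ : (TermP S).Obj (Term S × Bool))
    | none => ⟨Sum.inr x, fun i => (ch i, true)⟩) = _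
  rw [hs]
  rfl

lemma substStep_var_none (σ : Subst S) {t : Term S} {x ch} (h : PFunctor.M.dest t = ⟨Sum.inr x, ch⟩)
    (hs : σ.toFun x = none) :
    substStep S σ (t, true) = ⟨Sum.inr x, fun i => (ch i, true)⟩ := by
  show (match PFunctor.M.dest t, true with
    | ⟨Sum.inl f, ch⟩, b => (⟨Sum.inl f, fun i => (ch i, b)⟩ : (TermP S).Obj (Term S × Bool))
    | ⟨Sum.inr x, ch⟩, true =>
        match σ.toFun x with
        | some s => match PFunctor.M.dest s with | ⟨l, ch'⟩ => ⟨l, fun i => (ch' i, false)⟩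
        | none => ⟨Sum.inr x, fun i => (ch i, true)⟩
    | ⟨Sum.inr x, ch⟩, false => ⟨Sum.inr x, fun i => (ch i, false)⟩) = _
  rw [h]
  change (match σ.toFun x with
    | some s => match PFunctor.M.dest s with
      | ⟨l, ch'⟩ => (⟨l, fun i => (ch' i, false)⟩ : (TermP S).Obj (Term S × Bool))
    | none => ⟨Sum.inr x, fun i => (ch i, true)⟩) = _
  rw [hs]

lemma dest_subst_inl (σ : Subst S) {t : Term S} {f ch} (h : PFunctor.M.dest t = ⟨Sum.inl f, ch⟩) :
    PFunctor.M.dest (t.subst σ) = ⟨Sum.inl f, fun i => Term.subst (ch i) σ⟩ := by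
  rw [Term.subst, PFunctor.M.dest_corec, substStep_inl σ h]
  rfl

lemma subst_var_some (σ : Subst S) {t : Term S} {x ch s} (h : PFunctor.M.dest t = ⟨Sum.inr x, ch⟩)
    (hs : σ.toFun x = some s) : t.subst σ = s := by
  have hd : PFunctor.M.dest (t.subst σ) = PFunctor.M.dest s := by
    rw [Term.subst, PFunctor.M.dest_corec, substStep_var_some σ h hs]
    show (⟨(PFunctor.M.dest s).1, fun i => PFunctor.M.corec (substStep S σ) ((PFunctor.M.dest s).2 i, false)⟩ :
      (TermP S).Obj (Term S)) = _
    have he : (fun i => PFunctor.M.corec (substStep S σ) ((PFunctor.M.dest s).2 i, false))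
        = (PFunctor.M.dest s).2 := funext fun i => corec_false σ _
    rw [he]
    rfl
  rw [← PFunctor.M.mk_dest (t.subst σ), hd, PFunctor.M.mk_dest s]

lemma subst_var_none (σ : Subst S) {t : Term S} {x ch} (h : PFunctor.M.dest t = ⟨Sum.inr x, ch⟩)
    (hs : σ.toFun x = none) : t.subst σ = t := by
  have hd : PFunctor.M.dest (t.subst σ) = PFunctor.M.dest t := by
    rw [Term.subst, PFunctor.M.dest_corec, substStep_var_none σ h hs, h]
    show (⟨Sum.inr x, fun i => PFunctor.M.corec (substStep S σ) (ch i, true)⟩ :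
      (TermP S).Obj (Term S)) = _
    congr 1
    funext i
    exact i.elim0
  rw [← PFunctor.M.mk_dest (t.subst σ), hd, PFunctor.M.mk_dest t]

lemma occurs_elim {x : ℕ} {u : Term S} (h : Term.Occurs S x u) :
    (PFunctor.M.dest u).1 = Sum.inr x ∨
      ∃ i : (TermP S).B (PFunctor.M.dest u).1, Term.Occurs S x ((PFunctor.M.dest u).2 i) := by
  cases h with
  | root _ h => exact Or.inl h
  | child _ i h => exact Or.inr ⟨i, h⟩

lemma occurs_root' {x : ℕ} {u : Term S} {ch} (e : PFunctor.M.dest u = ⟨Sum.inr x, ch⟩) :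
    Term.Occurs S x u :=
  Term.Occurs.root u (by rw [e])

lemma occurs_child' {x : ℕ} {u : Term S} {l ch} (e : PFunctor.M.dest u = ⟨l, ch⟩)
    (i : (TermP S).B l) (h : Term.Occurs S x (ch i)) : Term.Occurs S x u := by
  have h2 : ∃ i' : (TermP S).B (PFunctor.M.dest u).1, Term.Occurs S x ((PFunctor.M.dest u).2 i') := by
    rw [e]; exact ⟨i, h⟩
  obtain ⟨i', h'⟩ := h2
  exact Term.Occurs.child u i' h'

lemma occurs_elim' {x : ℕ} {u : Term S} {l ch} (e : PFunctor.M.dest u = ⟨l, ch⟩)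
    (h : Term.Occurs S x u) :
    l = Sum.inr x ∨ ∃ i : (TermP S).B l, Term.Occurs S x (ch i) := by
  have h2 := occurs_elim h
  rw [e] at h2
  exact h2

lemma isFinite_elim' {u : Term S} {l ch} (e : PFunctor.M.dest u = ⟨l, ch⟩)
    (h : Term.IsFinite S u) : ∀ i : (TermP S).B l, Term.IsFinite S (ch i) := by
  cases h with
  | mk _ h =>
      have h2 : ∀ i : (TermP S).B (PFunctor.M.dest u).1, Term.IsFinite S ((PFunctor.M.dest u).2 i) := h
      rw [e] at h2
      exact h2

lemma isFinite_intro' {u : Term S} {l ch} (e : PFunctor.M.dest u = ⟨l, ch⟩)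
    (h : ∀ i : (TermP S).B l, Term.IsFinite S (ch i)) : Term.IsFinite S u := by
  have key := congrArg
    (fun p : (TermP S).Obj (Term S) => ∀ i : (TermP S).B p.1, Term.IsFinite S (p.2 i)) e
  exact Term.IsFinite.mk u (cast key.symm h)

/-- a term whose root is a variable equals `Term.var` of it -/
lemma eq_var {u : Term S} {x ch} (e : PFunctor.M.dest u = ⟨Sum.inr x, ch⟩) :
    u = Term.var S x := by
  have : PFunctor.M.dest u = PFunctor.M.dest (Term.var S x) := by
    erw [e, Term.var, PFunctor.M.dest_mk]
    congr 1
    funext i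
    exact i.elim0
  rw [← PFunctor.M.mk_dest u, this, PFunctor.M.mk_dest (Term.var S x)]

lemma var_isFinite (x : ℕ) : Term.IsFinite S (Term.var S x) := by
  apply isFinite_intro' (by erw [Term.var, PFunctor.M.dest_mk] : PFunctor.M.dest (Term.var S x) = ⟨Sum.inr x, fun i => i.elim0⟩)
  intro i
  exact i.elim0

lemma occurs_var {x y : ℕ} (h : Term.Occurs S x (Term.var S y)) : x = y := by
  have e : PFunctor.M.dest (Term.var S y) = ⟨Sum.inr y, fun i => i.elim0⟩ := by
    erw [Term.var, PFunctor.M.dest_mk]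
  rcases occurs_elim' e h with h | ⟨i, _⟩
  · cases h; rfl
  · exact i.elim0

lemma occurs_var_self (x : ℕ) : Term.Occurs S x (Term.var S x) :=
  occurs_root' (by erw [Term.var, PFunctor.M.dest_mk])

lemma dest_pi {C : Term S → Prop} {t : Term S} {l ch} (e : PFunctor.M.dest t = ⟨l, ch⟩)
    (h : ∀ i, C ((PFunctor.M.dest t).2 i)) : ∀ i : (TermP S).B l, C (ch i) :=
  cast (congrArg (fun p : (TermP S).Obj (Term S) => ∀ i : (TermP S).B p.1, C (p.2 i)) e) h

lemma subst_eq_of_agree {σ1 σ2 : Subst S} {t : Term S} (hfin : Term.IsFinite S t)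
    (hocc : ∀ x, Term.Occurs S x t → σ1.toFun x = σ2.toFun x) :
    t.subst σ1 = t.subst σ2 := by
  induction hfin with
  | mk t ht ih =>
    rcases e : PFunctor.M.dest t with ⟨f | x, ch⟩
    · rw [← PFunctor.M.mk_dest (t.subst σ1), ← PFunctor.M.mk_dest (t.subst σ2),
        dest_subst_inl σ1 e, dest_subst_inl σ2 e]
      congr 1
      refine congrArg _ (funext fun i => ?_)
      exact dest_pi (C := fun u => (∀ x, Term.Occurs S x u → σ1.toFun x = σ2.toFun x) →
          Term.subst u σ1 = Term.subst u σ2) e ih i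
        (fun x hx => hocc x (occurs_child' e i hx))
    · have hx := hocc x (occurs_root' e)
      cases h1 : σ1.toFun x with
      | some s =>
          rw [subst_var_some σ1 e h1, subst_var_some σ2 e (hx ▸ h1)]
      | none =>
          rw [subst_var_none σ1 e h1, subst_var_none σ2 e (hx ▸ h1)]

lemma subst_isFinite {σ : Subst S} {t : Term S} (hfin : Term.IsFinite S t)
    (hσ : ∀ x s, σ.toFun x = some s → Term.IsFinite S s) :
    Term.IsFinite S (t.subst σ) := by
  induction hfin with
  | mk t ht ih =>
    rcases e : PFunctor.M.dest t with ⟨f | x, ch⟩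
    · refine isFinite_intro' (dest_subst_inl σ e) fun i => ?_
      exact dest_pi (C := fun u => Term.IsFinite S (Term.subst u σ)) e ih i
    · cases h1 : σ.toFun x with
      | some s => rw [subst_var_some σ e h1]; exact hσ x s h1
      | none => rw [subst_var_none σ e h1]; exact isFinite_intro' e (dest_pi e ht)

lemma occurs_subst {σ : Subst S} {t : Term S} {x : ℕ} (hfin : Term.IsFinite S t)
    (h : Term.Occurs S x (t.subst σ)) :
    (∃ y s, Term.Occurs S y t ∧ σ.toFun y = some s ∧ Term.Occurs S x s) ∨
      (Term.Occurs S x t ∧ σ.toFun x = none) := by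
  induction hfin with
  | mk t ht ih =>
    rcases e : PFunctor.M.dest t with ⟨f | y, ch⟩
    · rcases occurs_elim' (dest_subst_inl σ e) h with h' | ⟨i, h'⟩
      · exact absurd h' (by simp)
      · rcases dest_pi (C := fun u => Term.Occurs S x (Term.subst u σ) →
            (∃ y s, Term.Occurs S y u ∧ σ.toFun y = some s ∧ Term.Occurs S x s) ∨
              (Term.Occurs S x u ∧ σ.toFun x = none)) e ih i h' with ⟨y, s, hy, hs, hx⟩ | ⟨hx, hn⟩
        · exact Or.inl ⟨y, s, occurs_child' e i hy, hs, hx⟩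
        · exact Or.inr ⟨occurs_child' e i hx, hn⟩
    · cases h1 : σ.toFun y with
      | some s =>
          rw [subst_var_some σ e h1] at h
          exact Or.inl ⟨y, s, occurs_root' e, h1, h⟩
      | none =>
          rw [subst_var_none σ e h1] at h
          rcases occurs_elim' e h with h' | ⟨i, _⟩
          · cases h'; exact Or.inr ⟨h, h1⟩
          · exact i.elim0

lemma occurs_subst_none {σ : Subst S} {t : Term S} {x : ℕ}
    (h : Term.Occurs S x t) (hx : σ.toFun x = none) : Term.Occurs S x (t.subst σ) := by
  induction h with
  | root t h =>
      rcases e : PFunctor.M.dest t with ⟨f | y, ch⟩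
      · rw [e] at h; cases h
      · rw [e] at h
        cases h
        rw [subst_var_none σ e hx]
        exact occurs_root' e
  | child t i h ih =>
      rcases e : PFunctor.M.dest t with ⟨f | y, ch⟩
      · have hmem : ∃ i' : (TermP S).B _, Term.Occurs S x (Term.subst (ch i') σ) := by
          have h2 : ∃ i' : (TermP S).B (PFunctor.M.dest t).1,
              Term.Occurs S x (Term.subst ((PFunctor.M.dest t).2 i') σ) := ⟨i, ih⟩
          exact cast (congrArg (fun p : (TermP S).Obj (Term S) =>
            ∃ i' : (TermP S).B p.1, Term.Occurs S x (Term.subst (p.2 i') σ)) e) h2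
        obtain ⟨i', hi'⟩ := hmem
        exact occurs_child' (dest_subst_inl σ e) i' hi'
      · have h2 : ∃ i' : (TermP S).B (PFunctor.M.dest t).1, True := ⟨i, trivial⟩
        have : ∃ i' : (TermP S).B (Sum.inr y : (TermP S).A), True :=
          cast (congrArg (fun p : (TermP S).Obj (Term S) =>
            ∃ i' : (TermP S).B p.1, True) e) h2
        obtain ⟨i', -⟩ := this
        exact i'.elim0

lemma subst_subst {ρ θ2 τ : Subst S} {t : Term S} (hfin : Term.IsFinite S t)
    (h : ∀ x, Term.Occurs S x t → ∃ y s, ρ.toFun x = some (Term.var S y) ∧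
      θ2.toFun y = some s ∧ τ.toFun x = some s) :
    (t.subst ρ).subst θ2 = t.subst τ := by
  induction hfin with
  | mk t ht ih =>
    rcases e : PFunctor.M.dest t with ⟨f | x, ch⟩
    · rw [← PFunctor.M.mk_dest ((t.subst ρ).subst θ2), ← PFunctor.M.mk_dest (t.subst τ),
        dest_subst_inl θ2 (dest_subst_inl ρ e), dest_subst_inl τ e]
      congr 1
      refine congrArg _ (funext fun i => ?_)
      exact dest_pi (C := fun u => (∀ x, Term.Occurs S x u → ∃ y s,
          ρ.toFun x = some (Term.var S y) ∧ θ2.toFun y = some s ∧ τ.toFun x = some s) →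
          (Term.subst (Term.subst u ρ) θ2 = Term.subst u τ)) e ih i
        (fun x hx => h x (occurs_child' e i hx))
    · obtain ⟨y, s, hρ, hθ2, hτ⟩ := h x (occurs_root' e)
      rw [subst_var_some ρ e hρ, subst_var_some τ e hτ]
      exact subst_var_some θ2 (by erw [Term.var, PFunctor.M.dest_mk]) hθ2

lemma var_inj {a b : ℕ} (h : Term.var S a = Term.var S b) : a = b := by
  have h2 := congrArg (fun u => (PFunctor.M.dest u).1) h
  simp only [Term.var, PFunctor.M.dest_mk] at h2
  exact Sum.inr.inj h2

instance termP_B_finite (l : (TermP S).A) : Finite ((TermP S).B l) := by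
  rcases l with f | x
  · exact inferInstanceAs (Finite (Fin (S.far f)))
  · exact inferInstanceAs (Finite (Fin 0))

lemma occurs_finite {t : Term S} (hfin : Term.IsFinite S t) :
    {x | Term.Occurs S x t}.Finite := by
  induction hfin with
  | mk t ht ih =>
    have hsub : {x | Term.Occurs S x t} ⊆
        {x | (PFunctor.M.dest t).1 = Sum.inr x} ∪
          ⋃ i, {x | Term.Occurs S x ((PFunctor.M.dest t).2 i)} := by
      intro x hx
      rcases occurs_elim hx with h | ⟨i, h⟩
      · exact Or.inl h
      · exact Or.inr (Set.mem_iUnion.2 ⟨i, h⟩)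
    refine Set.Finite.subset (Set.Finite.union ?_ (Set.finite_iUnion ih)) hsub
    apply Set.Subsingleton.finite
    intro a ha b hb
    simp only [Set.mem_setOf_eq] at ha hb
    rw [ha] at hb
    exact Sum.inr.inj hb

lemma atom_occurs_finite {A : Atom S} (hA : A.IsFinite) :
    {x | Atom.Occurs x A}.Finite := by
  have : {x | Atom.Occurs x A} = ⋃ i, {x | Term.Occurs S x (A.args i)} := by
    ext x; simp [Atom.Occurs, Set.mem_iUnion]
  rw [this]
  exact Set.finite_iUnion fun i => occurs_finite (hA i)

lemma clauseVars_finite (C : Clause S) : (clauseVars C).Finite := by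
  have hsub : clauseVars C ⊆ {x | Atom.Occurs x C.head} ∪
      ⋃ B ∈ {B | B ∈ C.body}, {x | Atom.Occurs x B} := by
    intro x hx
    rcases hx with h | ⟨B, hB, h⟩
    · exact Or.inl h
    · exact Or.inr (by simpa using ⟨B, hB, h⟩)
  refine Set.Finite.subset (Set.Finite.union (atom_occurs_finite C.finHead) ?_) hsub
  exact Set.Finite.biUnion (List.finite_toSet C.body) fun B hB => atom_occurs_finite (C.finBody B hB)

lemma exists_bound {s : Set ℕ} (h : s.Finite) : ∃ N, ∀ x ∈ s, x ≤ N := by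
  obtain ⟨N, hN⟩ := h.bddAbove
  exact ⟨N, fun x hx => hN hx⟩

lemma atom_subst_pred (A : Atom S) (σ : Subst S) : (A.subst σ).pred = A.pred := rfl

lemma atom_subst_agree {σ1 σ2 : Subst S} {A : Atom S} (hA : A.IsFinite)
    (h : ∀ x, Atom.Occurs x A → σ1.toFun x = σ2.toFun x) : A.subst σ1 = A.subst σ2 := by
  unfold Atom.subst
  exact congrArg _ (funext fun i => subst_eq_of_agree (hA i) fun x hx => h x ⟨i, hx⟩)

lemma atom_subst_isFinite {σ : Subst S} {A : Atom S} (hA : A.IsFinite)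
    (hσ : ∀ x s, σ.toFun x = some s → Term.IsFinite S s) : (A.subst σ).IsFinite :=
  fun i => subst_isFinite (hA i) hσ

lemma atom_subst_args_eq {θ θ' : Subst S} {A B : Atom S} (h : A.pred = B.pred)
    (e : A.subst θ = B.subst θ') (i : Fin (S.par A.pred)) :
    (A.args i).subst θ = (B.args (Fin.cast (congrArg S.par h) i)).subst θ' := by
  rcases B with ⟨pB, argsB⟩
  dsimp at h
  subst h
  have e2 : (fun i => (A.args i).subst θ) = fun i => (argsB i).subst θ' := by
    obtain ⟨-, h2⟩ := Atom.mk.inj e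
    exact eq_of_heq h2
  have := congrFun e2 i
  simpa using this

lemma atom_subst_subst {ρ θ2 τ : Subst S} {A : Atom S} (hA : A.IsFinite)
    (h : ∀ x, Atom.Occurs x A → ∃ y s, ρ.toFun x = some (Term.var S y) ∧
      θ2.toFun y = some s ∧ τ.toFun x = some s) :
    (A.subst ρ).subst θ2 = A.subst τ := by
  unfold Atom.subst
  exact congrArg _ (funext fun i => subst_subst (hA i) fun x hx => h x ⟨i, hx⟩)

lemma subst_le_dom {θ θ2 : Subst S} (h : Subst.le θ θ2) : θ.dom ⊆ θ2.dom := by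
  intro x hx
  rcases Option.isSome_iff_exists.1 hx with ⟨t, ht⟩
  exact Option.isSome_iff_exists.2 ⟨t, h x t ht⟩

lemma subst_le_refl (θ : Subst S) : Subst.le θ θ := fun _ _ h => h

lemma subst_le_trans {θ1 θ2 θ3 : Subst S} (h12 : Subst.le θ1 θ2) (h23 : Subst.le θ2 θ3) :
    Subst.le θ1 θ3 := fun x t h => h23 x t (h12 x t h)

lemma subst_agree_of_le {θ θ2 : Subst S} (h : Subst.le θ θ2) {x : ℕ} (hx : x ∈ θ.dom) :
    θ2.toFun x = θ.toFun x := by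
  rcases Option.isSome_iff_exists.1 hx with ⟨t, ht⟩
  rw [ht, h x t ht]

lemma atomEqs_finite (A B : Atom S) : (atomEqs A B).Finite := by
  by_cases h : A.pred = B.pred
  · refine Set.Finite.subset (Set.finite_range
      (fun i : Fin (S.par A.pred) => (A.args i, B.args (Fin.cast (congrArg S.par h) i)))) ?_
    rintro e ⟨h', i, he⟩
    exact ⟨i, he.symm⟩
  · have : atomEqs A B = ∅ := by
      ext e
      simp only [atomEqs, Set.mem_setOf_eq, Set.mem_empty_iff_false, iff_false, not_exists]
      intro h'
      exact absurd h' h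
    rw [this]; exact Set.finite_empty

lemma eqnVars_union (E1 E2 : Set (Eqn S)) :
    eqnVars (E1 ∪ E2) = eqnVars E1 ∪ eqnVars E2 := by
  ext x
  constructor
  · rintro ⟨e, he | he, h⟩
    · exact Or.inl ⟨e, he, h⟩
    · exact Or.inr ⟨e, he, h⟩
  · rintro (⟨e, he, h⟩ | ⟨e, he, h⟩)
    · exact ⟨e, Or.inl he, h⟩
    · exact ⟨e, Or.inr he, h⟩

lemma mem_sol_union {σ : Subst S} {E1 E2 : Set (Eqn S)}
    (h1 : σ ∈ sol E1) (h2vars : eqnVars E2 ⊆ σ.dom)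
    (h2eq : ∀ e ∈ E2, e.1.subst σ = e.2.subst σ) : σ ∈ sol (E1 ∪ E2) := by
  obtain ⟨hg, hv, he⟩ := h1
  refine ⟨hg, ?_, ?_⟩
  · rw [eqnVars_union]
    exact Set.union_subset hv h2vars
  · rintro e (h | h)
    · exact he e h
    · exact h2eq e h

lemma eqnSetFin_union {E1 E2 : Set (Eqn S)} (h1 : EqnSetFin E1) (h2 : E2.Finite)
    (h2fin : ∀ e ∈ E2, Term.IsFinite S e.1 ∧ Term.IsFinite S e.2) : EqnSetFin (E1 ∪ E2) := by
  refine ⟨h1.1.union h2, ?_⟩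
  rintro e (h | h)
  · exact h1.2 e h
  · exact h2fin e h

lemma atomEqs_vars {A B : Atom S} {x : ℕ} (h : x ∈ eqnVars (atomEqs A B)) :
    Atom.Occurs x A ∨ Atom.Occurs x B := by
  obtain ⟨e, ⟨hp, i, he⟩, hocc⟩ := h
  subst he
  rcases hocc with h | h
  · exact Or.inl ⟨i, h⟩
  · exact Or.inr ⟨_, h⟩

/-- fueled ground derivations in program `P'` (no circular hypotheses) -/
inductive DerivN (P' : Set (Clause S)) : ℕ → Atom S → Prop
  | rule {n : ℕ} {A : Atom S} (r : Atom S × List (Atom S)) :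
      r ∈ GroundInst P' → r.1 = A → (∀ B ∈ r.2, DerivN P' n B) → DerivN P' (n + 1) A

lemma derivN_mono {P' : Set (Clause S)} {n m : ℕ} {A : Atom S} (h : DerivN P' n A)
    (hnm : n ≤ m) : DerivN P' m A := by
  induction h generalizing m with
  | rule r hr h1 hprem ih =>
      rcases m with _ | m
      · omega
      · exact DerivN.rule r hr h1 fun B hB => ih B hB (by omega)

lemma fuel_join {Q : ℕ → Atom S → Prop} (mono : ∀ {n m A}, Q n A → n ≤ m → Q m A)
    (l : List (Atom S)) (h : ∀ B ∈ l, ∃ n, Q n B) : ∃ n, ∀ B ∈ l, Q n B := by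
  induction l with
  | nil => exact ⟨0, by simp⟩
  | cons A l ih =>
      obtain ⟨n1, hn1⟩ := h A (by simp)
      obtain ⟨n2, hn2⟩ := ih fun B hB => h B (List.mem_cons_of_mem _ hB)
      refine ⟨max n1 n2, ?_⟩
      intro B hB
      rcases List.mem_cons.1 hB with rfl | hB'
      · exact mono hn1 (le_max_left _ _)
      · exact mono (hn2 B hB') (le_max_right _ _)

lemma Ind_subset_derivN (P' : Set (Clause S)) {A : Atom S} (h : A ∈ Ind P') :
    ∃ n, DerivN P' n A := by
  have hmodel : IsModel P' {A | ∃ n, DerivN P' n A} := by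
    rintro A ⟨r, hr, h1, hprem⟩
    obtain ⟨n, hn⟩ := fuel_join (Q := fun n B => DerivN P' n B)
      (fun h le => derivN_mono h le) r.2 (fun B hB => hprem B hB)
    exact ⟨n + 1, h1 ▸ DerivN.rule r hr rfl hn⟩
  exact (Set.sInter_subset_of_mem
    (show {A | ∃ n, DerivN P' n A} ∈ {I | IsModel P' I} from hmodel)) h

/-- fueled version of the inference system `Loop(P,coP)` -/
inductive LoopIndN (P coP : Set (Clause S)) : ℕ → Set (Atom S) → Atom S → Prop
  | hp {n : ℕ} {H : Set (Atom S)} {A : Atom S} :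
      A ∈ H → A ∈ Ind (P ∪ coP) → LoopIndN P coP (n + 1) H A
  | rule {n : ℕ} {H : Set (Atom S)} {A : Atom S} (r : Atom S × List (Atom S)) :
      r ∈ GroundInst P → r.1 = A → (∀ B ∈ r.2, LoopIndN P coP n (H ∪ {A}) B) →
      LoopIndN P coP (n + 1) H A

lemma loopIndN_mono {P coP : Set (Clause S)} {n m : ℕ} {H : Set (Atom S)} {A : Atom S}
    (h : LoopIndN P coP n H A) (hnm : n ≤ m) : LoopIndN P coP m H A := by
  induction h generalizing m with
  | hp h1 h2 =>
      rcases m with _ | m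
      · omega
      · exact LoopIndN.hp h1 h2
  | rule r hr h1 hprem ih =>
      rcases m with _ | m
      · omega
      · exact LoopIndN.rule r hr h1 fun B hB => ih B hB (by omega)

lemma comodel_loopIndN {P coP : Set (Clause S)} {I : Set (Atom S)} (hIfin : I.Finite)
    (hco : IsComodel P I) (hind : I ⊆ Ind (P ∪ coP)) :
    ∀ k (H : Set (Atom S)) (A : Atom S), (I \ H).ncard = k → A ∈ I →
      ∃ n, LoopIndN P coP n H A := by
  intro k
  induction k using Nat.strong_induction_on with
  | _ k IH =>
    intro H A hk hA
    by_cases hH : A ∈ H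
    · exact ⟨1, LoopIndN.hp hH (hind hA)⟩
    · obtain ⟨r, hr, h1, hprem⟩ := hco hA
      have hlt : (I \ (H ∪ {A})).ncard < k := by
        rw [← hk, ← Set.diff_diff]
        exact Set.ncard_diff_singleton_lt_of_mem ⟨hA, hH⟩ (hIfin.subset Set.diff_subset)
      have hprem' : ∀ B ∈ r.2, ∃ n, LoopIndN P coP n (H ∪ {A}) B :=
        fun B hB => IH _ hlt (H ∪ {A}) B rfl (hprem B hB)
      obtain ⟨n, hn⟩ := fuel_join (Q := fun n B => LoopIndN P coP n (H ∪ {A}) B)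
        (fun h le => loopIndN_mono h le) r.2 hprem'
      exact ⟨n + 1, LoopIndN.rule r hr h1 hn⟩

lemma atomsVars_empty : atomsVars (∅ : Set (Atom S)) = ∅ := by
  ext x
  simp [atomsVars]

lemma step_setup (θ τ : Subst S) (C : Clause S) (avoid : Set ℕ)
    (hθg : θ.Ground) (hτg : τ.Ground) (havoid : avoid ⊆ θ.dom)
    (hheadG : Atom.Ground (C.head.subst τ))
    (hbodyG : ∀ B ∈ C.body, Atom.Ground (B.subst τ)) :
    ∃ ρ θ2 : Subst S,
      FreshRenamingFor ρ C avoid ∧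
      θ.le θ2 ∧ θ2.Ground ∧
      (∀ x ∈ θ.dom, θ2.toFun x = θ.toFun x) ∧
      (∀ t, Term.IsFinite S t → (∀ x, Term.Occurs S x t → x ∈ clauseVars C) →
        (Term.subst (t.subst ρ) θ2 = t.subst τ) ∧ Term.IsFinite S (t.subst ρ) ∧
        (∀ x, Term.Occurs S x (t.subst ρ) → x ∈ θ2.dom)) := by
  classical
  have hVfin : (clauseVars C).Finite := clauseVars_finite C
  obtain ⟨N, hN⟩ := exists_bound (θ.finDom)
  set m := N + 1 with hm
  have hτV : ∀ x ∈ clauseVars C, ∃ s, τ.toFun x = some s := by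
    intro x hx
    cases h : τ.toFun x with
    | some s => exact ⟨s, rfl⟩
    | none =>
        exfalso
        rcases hx with ⟨i, hi⟩ | ⟨B, hB, i, hi⟩
        · exact hheadG i x (occurs_subst_none hi h)
        · exact hbodyG B hB i x (occurs_subst_none hi h)
  have hfinρ : {x | (if x ∈ clauseVars C then some (Term.var S (x + m)) else none).isSome}.Finite := by
    refine Set.Finite.subset hVfin ?_
    intro x hx
    simp only [Set.mem_setOf_eq] at hx
    by_contra hxV
    rw [if_neg hxV] at hx
    simp at hx
  have hfinθ2 : {z | (if m ≤ z ∧ z - m ∈ clauseVars C then τ.toFun (z - m) else θ.toFun z).isSome}.Finite := by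
    refine Set.Finite.subset ((θ.finDom).union (hVfin.image (fun x => x + m))) ?_
    intro z hz
    simp only [Set.mem_setOf_eq] at hz
    by_cases h : m ≤ z ∧ z - m ∈ clauseVars C
    · right
      refine ⟨z - m, h.2, ?_⟩
      show z - m + m = z
      omega
    · rw [if_neg h] at hz
      exact Or.inl hz
  refine ⟨⟨fun x => if x ∈ clauseVars C then some (Term.var S (x + m)) else none, hfinρ⟩,
    ⟨fun z => if m ≤ z ∧ z - m ∈ clauseVars C then τ.toFun (z - m) else θ.toFun z, hfinθ2⟩,
    ⟨?_, ?_, ?_⟩, ?_, ?_, ?_, ?_⟩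
  · intro x t h
    simp only at h
    by_cases hxV : x ∈ clauseVars C
    · rw [if_pos hxV] at h
      refine ⟨x + m, (Option.some.inj h).symm, fun hav => ?_⟩
      have := hN _ (havoid hav)
      omega
    · rw [if_neg hxV] at h
      cases h
  · intro x hx
    simp only [Subst.dom, Set.mem_setOf_eq, if_pos hx, Option.isSome_some]
  · intro x y he hs
    simp only at he hs
    by_cases hxV : x ∈ clauseVars C
    · by_cases hyV : y ∈ clauseVars C
      · rw [if_pos hxV, if_pos hyV] at he
        have := var_inj (Option.some.inj he)
        omega
      · rw [if_pos hxV, if_neg hyV] at he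
        cases he
    · rw [if_neg hxV] at hs
      simp at hs
  · intro x t h
    have hx : x ∈ θ.dom := Option.isSome_iff_exists.2 ⟨t, h⟩
    have hxN := hN _ hx
    simp only
    rw [if_neg (by omega)]
    exact h
  · intro z t h
    simp only at h
    by_cases hc : m ≤ z ∧ z - m ∈ clauseVars C
    · rw [if_pos hc] at h
      exact hτg _ t h
    · rw [if_neg hc] at h
      exact hθg z t h
  · intro x hx
    have := hN _ hx
    simp only
    rw [if_neg (by omega)]
  · intro t ht hvars
    have hkey : ∀ x, Term.Occurs S x t → ∃ y s,
        (if x ∈ clauseVars C then some (Term.var S (x + m)) else none) = some (Term.var S y) ∧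
        (if m ≤ y ∧ y - m ∈ clauseVars C then τ.toFun (y - m) else θ.toFun y) = some s ∧
        τ.toFun x = some s := by
      intro x hx
      have hxV := hvars x hx
      obtain ⟨s, hs⟩ := hτV x hxV
      refine ⟨x + m, s, by rw [if_pos hxV], ?_, hs⟩
      rw [if_pos ⟨by omega, by simpa [Nat.add_sub_cancel] using hxV⟩]
      simpa [Nat.add_sub_cancel] using hs
    have hρfin : ∀ x s,
        (if x ∈ clauseVars C then some (Term.var S (x + m)) else none) = some s →
        Term.IsFinite S s := by
      intro x s h
      by_cases hxV : x ∈ clauseVars C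
      · rw [if_pos hxV] at h
        rw [← Option.some.inj h]
        exact var_isFinite _
      · rw [if_neg hxV] at h
        cases h
    refine ⟨subst_subst ht hkey, subst_isFinite ht hρfin, ?_⟩
    intro x hx
    rcases occurs_subst ht hx with ⟨y, s, hy, hys, hxs⟩ | ⟨hocc, hnone⟩
    · simp only at hys
      by_cases hyV : y ∈ clauseVars C
      · rw [if_pos hyV] at hys
        have hsv : s = Term.var S (y + m) := (Option.some.inj hys).symm
        have hxy : x = y + m := occurs_var (hsv ▸ hxs)
        · obtain ⟨s', hs'⟩ := hτV y hyV
          show (if m ≤ x ∧ x - m ∈ clauseVars C then τ.toFun (x - m) else θ.toFun x).isSome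
          rw [if_pos ⟨by omega, by simp [hxy, Nat.add_sub_cancel, hyV]⟩]
          simp [hxy, Nat.add_sub_cancel, hs']
      · rw [if_neg hyV] at hys
        cases hys
    · refine absurd hnone ?_
      simp only
      rw [if_pos (hvars x hocc)]
      simp

/-- invariants carried through the completeness proof -/
structure Inv (θ : Subst S) (E1 : Set (Eqn S)) (H : Set (Atom S)) (G : List (Atom S)) : Prop where
  ground : θ.Ground
  sol : θ ∈ sol E1
  efin : EqnSetFin E1
  gfin : ∀ A ∈ G, A.IsFinite
  gvars : goalVars G ⊆ θ.dom
  hfin : ∀ A ∈ H, A.IsFinite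
  hvars : atomsVars H ⊆ θ.dom

lemma sol_of_agree {θ θ2 : Subst S} {E1 : Set (Eqn S)} (h : θ ∈ sol E1) (hfin : EqnSetFin E1)
    (hg : θ2.Ground) (hdom : θ.dom ⊆ θ2.dom)
    (hagree : ∀ x ∈ θ.dom, θ2.toFun x = θ.toFun x) : θ2 ∈ sol E1 := by
  obtain ⟨hθg, hv, he⟩ := h
  refine ⟨hg, fun x hx => hdom (hv hx), fun e heq => ?_⟩
  have h1 : Term.subst e.1 θ2 = Term.subst e.1 θ :=
    subst_eq_of_agree (hfin.2 e heq).1 fun x hx => hagree x (hv ⟨e, heq, Or.inl hx⟩)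
  have h2 : Term.subst e.2 θ2 = Term.subst e.2 θ :=
    subst_eq_of_agree (hfin.2 e heq).2 fun x hx => hagree x (hv ⟨e, heq, Or.inr hx⟩)
  rw [h1, h2]
  exact he e heq

lemma step_glue {θ τ : Subst S} {E1 : Set (Eqn S)} {H : Set (Atom S)} {A : Atom S}
    {G2 : List (Atom S)} {C : Clause S}
    (inv : Inv θ E1 H (A :: G2)) (hτg : τ.Ground)
    (hheadG : Atom.Ground (C.head.subst τ))
    (hbodyG : ∀ B ∈ C.body, Atom.Ground (B.subst τ))
    (hAC : A.subst θ = C.head.subst τ) :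
    ∃ ρ θ2 : Subst S,
      FreshRenamingFor ρ C (eqnVars E1 ∪ atomsVars H ∪ goalVars (A :: G2)) ∧
      A.pred = C.head.pred ∧
      Solvable (E1 ∪ atomEqs A (C.head.subst ρ)) ∧
      θ.le θ2 ∧
      Inv θ2 (E1 ∪ atomEqs A (C.head.subst ρ)) (H ∪ {A}) (C.body.map (fun B => B.subst ρ)) ∧
      (∀ B ∈ C.body, (B.subst ρ).subst θ2 = B.subst τ) ∧
      (∀ x ∈ θ.dom, θ2.toFun x = θ.toFun x) := by
  have havoid : eqnVars E1 ∪ atomsVars H ∪ goalVars (A :: G2) ⊆ θ.dom := by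
    intro x hx
    rcases hx with (hx | hx) | hx
    · exact inv.sol.2.1 hx
    · exact inv.hvars hx
    · exact inv.gvars hx
  obtain ⟨ρ, θ2, hfresh, hle, hθ2g, hagree, hbundle⟩ :=
    step_setup θ τ C (eqnVars E1 ∪ atomsVars H ∪ goalVars (A :: G2))
      inv.ground hτg havoid hheadG hbodyG
  have hp0 := congrArg Atom.pred hAC
  have hp : A.pred = C.head.pred := hp0
  have hAfin : A.IsFinite := inv.gfin A (List.mem_cons_self)
  have hAvars : ∀ x, Atom.Occurs x A → x ∈ θ.dom := by
    intro x hx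
    exact inv.gvars ⟨A, List.mem_cons_self, hx⟩
  have hdom2 : θ.dom ⊆ θ2.dom := subst_le_dom hle
  -- head bundle facts
  have hheadbundle : ∀ i : Fin (S.par C.head.pred),
      (Term.subst ((C.head.args i).subst ρ) θ2 = (C.head.args i).subst τ) ∧
      Term.IsFinite S ((C.head.args i).subst ρ) ∧
      (∀ x, Term.Occurs S x ((C.head.args i).subst ρ) → x ∈ θ2.dom) :=
    fun i => hbundle (C.head.args i) (C.finHead i) (fun x hx => Or.inl ⟨i, hx⟩)
  have hbodybundle : ∀ B ∈ C.body, ∀ i : Fin (S.par B.pred),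
      (Term.subst ((B.args i).subst ρ) θ2 = (B.args i).subst τ) ∧
      Term.IsFinite S ((B.args i).subst ρ) ∧
      (∀ x, Term.Occurs S x ((B.args i).subst ρ) → x ∈ θ2.dom) :=
    fun B hB i => hbundle (B.args i) (C.finBody B hB i) (fun x hx => Or.inr ⟨B, hB, i, hx⟩)
  -- the new equations are solved by θ2
  have heqs : ∀ e ∈ atomEqs A (C.head.subst ρ), Term.subst e.1 θ2 = Term.subst e.2 θ2 := by
    rintro e ⟨hp', i, he⟩
    subst he
    have h1 : Term.subst (A.args i) θ2 = Term.subst (A.args i) θ :=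
      subst_eq_of_agree (hAfin i) fun x hx => hagree x (hAvars x ⟨i, hx⟩)
    have h2 : Term.subst (A.args i) θ =
        Term.subst (C.head.args (Fin.cast (congrArg S.par hp) i)) τ :=
      atom_subst_args_eq hp hAC i
    have hj : ((C.head.subst ρ).args (Fin.cast (congrArg S.par hp') i)) =
        (C.head.args (Fin.cast (congrArg S.par hp) i)).subst ρ := by
      show (C.head.args (Fin.cast (congrArg S.par hp') i)).subst ρ = _
      congr 1
    rw [h1, h2, hj, (hheadbundle _).1]
  have hvarseqs : eqnVars (atomEqs A (C.head.subst ρ)) ⊆ θ2.dom := by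
    intro x hx
    rcases atomEqs_vars hx with ⟨i, h⟩ | ⟨i, h⟩
    · exact hdom2 (hAvars x ⟨i, h⟩)
    · exact (hheadbundle i).2.2 x h
  have hsol2 : θ2 ∈ sol (E1 ∪ atomEqs A (C.head.subst ρ)) := by
    refine mem_sol_union (sol_of_agree inv.sol inv.efin hθ2g hdom2 hagree) hvarseqs heqs
  refine ⟨ρ, θ2, hfresh, hp, ⟨θ2, hsol2⟩, hle, ?_, ?_, hagree⟩
  · refine ⟨hθ2g, hsol2, ?_, ?_, ?_, ?_, ?_⟩
    · refine eqnSetFin_union inv.efin (atomEqs_finite _ _) ?_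
      rintro e ⟨hp', i, he⟩
      subst he
      exact ⟨hAfin i, (hheadbundle _).2.1⟩
    · rintro A' hA'
      obtain ⟨B, hB, rfl⟩ := List.mem_map.1 hA'
      exact fun i => (hbodybundle B hB i).2.1
    · rintro x ⟨A', hA', i, hx⟩
      obtain ⟨B, hB, rfl⟩ := List.mem_map.1 hA'
      exact (hbodybundle B hB i).2.2 x hx
    · rintro A' (hA' | hA')
      · exact inv.hfin A' hA'
      · rw [hA']
        exact hAfin
    · rintro x ⟨A', hA' | hA', hx⟩
      · exact hdom2 (inv.hvars ⟨A', hA', hx⟩)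
      · rw [hA'] at hx
        exact hdom2 (hAvars x hx)
  · intro B hB
    show Atom.mk _ _ = Atom.mk _ _
    exact congrArg _ (funext fun i => (hbodybundle B hB i).1)

/-- image of a set of atoms under a substitution -/
def aImg (θ : Subst S) (H : Set (Atom S)) : Set (Atom S) := (fun B => Atom.subst B θ) '' H

lemma aImg_agree {θ θ2 : Subst S} {H : Set (Atom S)} (hfin : ∀ B ∈ H, B.IsFinite)
    (hvars : atomsVars H ⊆ θ.dom) (hagree : ∀ x ∈ θ.dom, θ2.toFun x = θ.toFun x) :
    aImg θ2 H = aImg θ H :=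
  Set.image_congr fun B hB =>
    atom_subst_agree (hfin B hB) fun x hx => hagree x (hvars ⟨B, hB, hx⟩)

lemma inner_complete (P' coP' : Set (Clause S)) :
    ∀ n (G : List (Atom S)), ∀ (H : Set (Atom S)) (E1 : Set (Eqn S)) (θ : Subst S),
      Inv θ E1 H G → (∀ A ∈ G, DerivN P' n (A.subst θ)) →
      ∃ E2 θ2, OpSem S P' coP' H G E1 E2 ∧ θ.le θ2 ∧ θ2 ∈ sol E2 ∧ EqnSetFin E2 ∧
        θ2.Ground := by
  intro n
  induction n using Nat.strong_induction_on with
  | _ n IHn =>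
  intro G
  induction G with
  | nil =>
      intro H E1 θ inv _
      exact ⟨E1, θ, OpSem.empty _ _ _ _, subst_le_refl θ, inv.sol, inv.efin, inv.ground⟩
  | cons A G2 IH =>
      intro H E1 θ inv hder
      have hA := hder A (List.mem_cons_self)
      cases hA with
      | @rule k _ r hr h1 hprem =>
        obtain ⟨C, hC, τ, hτg, hr1, hr2, hrg1, hrg2⟩ := hr
        have hAC : A.subst θ = C.head.subst τ := by rw [← h1, hr1]
        have hheadG : Atom.Ground (C.head.subst τ) := hr1 ▸ hrg1
        have hbodyG : ∀ B ∈ C.body, Atom.Ground (B.subst τ) := fun B hB =>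
          hrg2 (B.subst τ) (by rw [hr2]; exact List.mem_map_of_mem hB)
        obtain ⟨ρ, θ2, hfresh, hpred, hsolv, hle, invBody, hcompBody, hagree⟩ :=
          step_glue inv hτg hheadG hbodyG hAC
        have hbodyder : ∀ B' ∈ C.body.map (fun B => B.subst ρ), DerivN P' k (B'.subst θ2) := by
          intro B' hB'
          obtain ⟨B, hB, rfl⟩ := List.mem_map.1 hB'
          rw [hcompBody B hB]
          exact hprem (B.subst τ) (by rw [hr2]; exact List.mem_map_of_mem hB)
        obtain ⟨E2, θ3, op1, hle23, hsol3, hefin3, hg3⟩ :=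
          IHn k (Nat.lt_succ_self k) (C.body.map (fun B => B.subst ρ)) (H ∪ {A}) _ θ2
            invBody hbodyder
        have hle13 : θ.le θ3 := subst_le_trans hle hle23
        have invTail : Inv θ3 E2 H G2 := by
          refine ⟨hg3, hsol3, hefin3, fun B hB => inv.gfin B (List.mem_cons_of_mem _ hB),
            fun x hx => ?_, inv.hfin, fun x hx => subst_le_dom hle13 (inv.hvars hx)⟩
          obtain ⟨B, hB, hx⟩ := hx
          exact subst_le_dom hle13 (inv.gvars ⟨B, List.mem_cons_of_mem _ hB, hx⟩)
        have hdertail : ∀ B ∈ G2, DerivN P' (k + 1) (B.subst θ3) := by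
          intro B hB
          have heq : B.subst θ3 = B.subst θ :=
            atom_subst_agree (inv.gfin B (List.mem_cons_of_mem _ hB)) fun x hx =>
              subst_agree_of_le hle13 (inv.gvars ⟨B, List.mem_cons_of_mem _ hB, hx⟩)
          rw [heq]
          exact hder B (List.mem_cons_of_mem _ hB)
        obtain ⟨E3, θ4, op2, hle34, hsol4, hefin4, hg4⟩ := IH H E2 θ3 invTail hdertail
        exact ⟨E3, θ4, OpSem.step (G1 := []) C ρ hC hfresh hpred hsolv op1 op2,
          subst_le_trans hle13 hle34, hsol4, hefin4, hg4⟩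

lemma main_complete (P coP : Set (Clause S)) (hcoP : coP ≠ ∅) :
    ∀ n (G : List (Atom S)), ∀ (H : Set (Atom S)) (E1 : Set (Eqn S)) (θ : Subst S),
      Inv θ E1 H G → (∀ A ∈ G, LoopIndN P coP n (aImg θ H) (A.subst θ)) →
      ∃ E2 θ2, OpSem S P coP H G E1 E2 ∧ θ.le θ2 ∧ θ2 ∈ sol E2 ∧ EqnSetFin E2 ∧
        θ2.Ground := by
  intro n
  induction n using Nat.strong_induction_on with
  | _ n IHn =>
  intro G
  induction G with
  | nil =>
      intro H E1 θ inv _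
      exact ⟨E1, θ, OpSem.empty _ _ _ _, subst_le_refl θ, inv.sol, inv.efin, inv.ground⟩
  | cons A G2 IH =>
      intro H E1 θ inv hder
      have hAfin : A.IsFinite := inv.gfin A (List.mem_cons_self)
      have hAvars : ∀ x, Atom.Occurs x A → x ∈ θ.dom := fun x hx =>
        inv.gvars ⟨A, List.mem_cons_self, hx⟩
      have hA := hder A (List.mem_cons_self)
      cases hA with
      | @hp k _ _ hmem hind =>
        obtain ⟨B, hB, hBA⟩ := hmem
        have hp0 := congrArg Atom.pred hBA
        have hpred : A.pred = B.pred := hp0.symm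
        have hBfin : B.IsFinite := inv.hfin B hB
        have hBvars : ∀ x, Atom.Occurs x B → x ∈ θ.dom := fun x hx =>
          inv.hvars ⟨B, hB, hx⟩
        have heqs : ∀ e ∈ atomEqs A B, Term.subst e.1 θ = Term.subst e.2 θ := by
          rintro e ⟨hp', i, he⟩
          subst he
          exact atom_subst_args_eq hpred hBA.symm i
        have hvarseqs : eqnVars (atomEqs A B) ⊆ θ.dom := by
          intro x hx
          rcases atomEqs_vars hx with ⟨i, h⟩ | ⟨i, h⟩
          · exact hAvars x ⟨i, h⟩
          · exact hBvars x ⟨i, h⟩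
        have hsolE1' : θ ∈ sol (E1 ∪ atomEqs A B) := mem_sol_union inv.sol hvarseqs heqs
        have hefin' : EqnSetFin (E1 ∪ atomEqs A B) := by
          refine eqnSetFin_union inv.efin (atomEqs_finite _ _) ?_
          rintro e ⟨hp', i, he⟩
          subst he
          exact ⟨hAfin i, hBfin _⟩
        have invInner : Inv θ (E1 ∪ atomEqs A B) ∅ [A] := by
          refine ⟨inv.ground, hsolE1', hefin', ?_, ?_, ?_, ?_⟩
          · intro A' hA'
            rw [List.mem_singleton.1 hA']
            exact hAfin
          · rintro x ⟨A', hA', hx⟩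
            rw [List.mem_singleton.1 hA'] at hx
            exact hAvars x hx
          · intro A' hA'
            exact absurd hA' (Set.notMem_empty _)
          · rintro x ⟨A', hA', hx⟩
            exact absurd hA' (Set.notMem_empty _)
        obtain ⟨m, hm⟩ := Ind_subset_derivN (P ∪ coP) hind
        have hderInner : ∀ A' ∈ [A], DerivN (P ∪ coP) m (A'.subst θ) := by
          intro A' hA'
          rw [List.mem_singleton.1 hA']
          exact hm
        obtain ⟨E2, θ2, op1, hle12, hsol2, hefin2, hg2⟩ :=
          inner_complete (P ∪ coP) ∅ m [A] ∅ (E1 ∪ atomEqs A B) θ invInner hderInner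
        have invTail : Inv θ2 E2 H G2 := by
          refine ⟨hg2, hsol2, hefin2, fun B' hB' => inv.gfin B' (List.mem_cons_of_mem _ hB'),
            fun x hx => ?_, inv.hfin, fun x hx => subst_le_dom hle12 (inv.hvars hx)⟩
          obtain ⟨B', hB', hx⟩ := hx
          exact subst_le_dom hle12 (inv.gvars ⟨B', List.mem_cons_of_mem _ hB', hx⟩)
        have hagree12 : ∀ x ∈ θ.dom, θ2.toFun x = θ.toFun x := fun x hx =>
          subst_agree_of_le hle12 hx
        have hdertail : ∀ B' ∈ G2, LoopIndN P coP (k + 1) (aImg θ2 H) (B'.subst θ2) := by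
          intro B' hB'
          have heq : B'.subst θ2 = B'.subst θ :=
            atom_subst_agree (inv.gfin B' (List.mem_cons_of_mem _ hB')) fun x hx =>
              hagree12 x (inv.gvars ⟨B', List.mem_cons_of_mem _ hB', hx⟩)
          rw [heq, aImg_agree inv.hfin inv.hvars hagree12]
          exact hder B' (List.mem_cons_of_mem _ hB')
        obtain ⟨E3, θ3, op2, hle23, hsol3, hefin3, hg3⟩ := IH H E2 θ2 invTail hdertail
        exact ⟨E3, θ3, OpSem.cohyp (G1 := []) hcoP hB hpred ⟨θ, hsolE1'⟩ op1 op2,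
          subst_le_trans hle12 hle23, hsol3, hefin3, hg3⟩
      | @rule k _ _ r hr h1 hprem =>
        obtain ⟨C, hC, τ, hτg, hr1, hr2, hrg1, hrg2⟩ := hr
        have hAC : A.subst θ = C.head.subst τ := by rw [← h1, hr1]
        have hheadG : Atom.Ground (C.head.subst τ) := hr1 ▸ hrg1
        have hbodyG : ∀ B ∈ C.body, Atom.Ground (B.subst τ) := fun B hB =>
          hrg2 (B.subst τ) (by rw [hr2]; exact List.mem_map_of_mem hB)
        obtain ⟨ρ, θ2, hfresh, hpred, hsolv, hle, invBody, hcompBody, hagree⟩ :=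
          step_glue inv hτg hheadG hbodyG hAC
        have hAθ2 : A.subst θ2 = A.subst θ :=
          atom_subst_agree hAfin fun x hx => hagree x (hAvars x hx)
        have hyps : aImg θ2 (H ∪ {A}) = aImg θ H ∪ {A.subst θ} := by
          show (fun B => Atom.subst B θ2) '' (H ∪ {A}) = _
          rw [Set.image_union, Set.image_singleton]
          congr 1
          · exact aImg_agree inv.hfin inv.hvars hagree
          · rw [hAθ2]
        have hbodyder : ∀ B' ∈ C.body.map (fun B => B.subst ρ),
            LoopIndN P coP k (aImg θ2 (H ∪ {A})) (B'.subst θ2) := by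
          intro B' hB'
          obtain ⟨B, hB, rfl⟩ := List.mem_map.1 hB'
          rw [hcompBody B hB, hyps]
          exact hprem (B.subst τ) (by rw [hr2]; exact List.mem_map_of_mem hB)
        obtain ⟨E2, θ3, op1, hle23, hsol3, hefin3, hg3⟩ :=
          IHn k (Nat.lt_succ_self k) (C.body.map (fun B => B.subst ρ)) (H ∪ {A}) _ θ2
            invBody hbodyder
        have hle13 : θ.le θ3 := subst_le_trans hle hle23
        have invTail : Inv θ3 E2 H G2 := by
          refine ⟨hg3, hsol3, hefin3, fun B hB => inv.gfin B (List.mem_cons_of_mem _ hB),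
            fun x hx => ?_, inv.hfin, fun x hx => subst_le_dom hle13 (inv.hvars hx)⟩
          obtain ⟨B, hB, hx⟩ := hx
          exact subst_le_dom hle13 (inv.gvars ⟨B, List.mem_cons_of_mem _ hB, hx⟩)
        have hagree13 : ∀ x ∈ θ.dom, θ3.toFun x = θ.toFun x := fun x hx =>
          subst_agree_of_le hle13 hx
        have hdertail : ∀ B ∈ G2, LoopIndN P coP (k + 1) (aImg θ3 H) (B.subst θ3) := by
          intro B hB
          have heq : B.subst θ3 = B.subst θ :=
            atom_subst_agree (inv.gfin B (List.mem_cons_of_mem _ hB)) fun x hx =>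
              hagree13 x (inv.gvars ⟨B, List.mem_cons_of_mem _ hB, hx⟩)
          rw [heq, aImg_agree inv.hfin inv.hvars hagree13]
          exact hder B (List.mem_cons_of_mem _ hB)
        obtain ⟨E3, θ4, op2, hle34, hsol4, hefin4, hg4⟩ := IH H E2 θ3 invTail hdertail
        exact ⟨E3, θ4, OpSem.step (G1 := []) C ρ hC hfresh hpred hsolv op1 op2,
          subst_le_trans hle13 hle34, hsol4, hefin4, hg4⟩

end Aux

/-- Completeness of flexible coSLD resolution w.r.t. the regular declarative semantics:
every answer correct in `FlexReg(P,coP)` is included in a computed answer. -/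
theorem completeness_wrt_regular_declarative_semantics (S : Sig) (P coP : Set (Clause S))
    (hP : P.Finite) (hcoP : coP.Finite)
    (G : List (Atom S)) (hG : ∀ A ∈ G, A.IsFinite)
    (E : Set (Eqn S)) (hE : EqnSetFin E)
    (σ : Subst S) (hσ : σ ∈ Ans G E (FlexReg P coP)) :
    ∃ (E' : Set (Eqn S)) (θ : Subst S), EqnSetFin E' ∧ θ ∈ sol E' ∧
      OpSem S P coP ∅ G E E' ∧ σ.le θ := by
  obtain ⟨hsolσ, hgv, hmem⟩ := hσ
  have inv0 : Inv σ E ∅ G := by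
    refine ⟨hsolσ.1, hsolσ, hE, hG, hgv, ?_, ?_⟩
    · intro A hA
      exact absurd hA (Set.notMem_empty _)
    · rintro x ⟨A, hA, -⟩
      exact absurd hA (Set.notMem_empty _)
  by_cases hc : coP = ∅
  · subst hc
    have hder : ∀ B ∈ G.map (fun A => A.subst σ), ∃ n, DerivN P n B := by
      intro B hB
      obtain ⟨A, hA, rfl⟩ := List.mem_map.1 hB
      obtain ⟨I, ⟨hIfin, hco, hsub⟩, hAI⟩ := hmem A hA
      have hind : A.subst σ ∈ Ind (P ∪ ∅) := hsub hAI
      rw [Set.union_empty] at hind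
      exact Ind_subset_derivN P hind
    obtain ⟨n, hn⟩ := fuel_join (Q := fun n B => DerivN P n B)
      (fun h le => derivN_mono h le) (G.map (fun A => A.subst σ)) hder
    obtain ⟨E2, θ2, op, hle, hsol, hefin, -⟩ :=
      inner_complete P ∅ n G ∅ E σ inv0
        (fun A hA => hn (A.subst σ) (List.mem_map_of_mem hA))
    exact ⟨E2, θ2, hefin, hsol, op, hle⟩
  · have hder : ∀ B ∈ G.map (fun A => A.subst σ), ∃ n, LoopIndN P coP n ∅ B := by
      intro B hB
      obtain ⟨A, hA, rfl⟩ := List.mem_map.1 hB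
      obtain ⟨I, ⟨hIfin, hco, hsub⟩, hAI⟩ := hmem A hA
      exact comodel_loopIndN hIfin hco hsub ((I \ ∅).ncard) ∅ _ rfl hAI
    obtain ⟨n, hn⟩ := fuel_join (Q := fun n B => LoopIndN P coP n ∅ B)
      (fun h le => loopIndN_mono h le) (G.map (fun A => A.subst σ)) hder
    have hImg : aImg σ (∅ : Set (Atom S)) = ∅ := Set.image_empty _
    obtain ⟨E2, θ2, op, hle, hsol, hefin, -⟩ :=
      main_complete P coP hc n G ∅ E σ inv0
        (fun A hA => by rw [hImg]; exact hn (A.subst σ) (List.mem_map_of_mem hA))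
    exact ⟨E2, θ2, hefin, hsol, op, hle⟩

end FlexLP
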